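/- Let Ω be an extended triassociative semigroup and let (A, (≺_ω), (≻_ω), (∘_ω)) be an Ω-tridendriform algebra. Equip the module kΩ ⊗ A with the three bilinear products (α⊗x) ≺ (β⊗y) := (α←β) ⊗ (x ≺_{α⊲β} y), (α⊗x) ≻ (β⊗y) := (α→β) ⊗ (x ≻_{α⊳β} y), (α⊗x) ∘ (β⊗y) := (α·β) ⊗ (x ∘_{α*β} y). Then (kΩ ⊗ A, ≺, ≻, ∘) is a (classical) tridendriform algebra. -/

import Mathlib

/-- The six binary operations of an extended triassociative semigroup. -/
structure ETSops (Ω : Type*) where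
  la : Ω → Ω → Ω   -- α ← β
  ra : Ω → Ω → Ω   -- α → β
  tl : Ω → Ω → Ω   -- α ⊲ β
  tr : Ω → Ω → Ω   -- α ⊳ β
  dot : Ω → Ω → Ω  -- α · β
  st : Ω → Ω → Ω   -- α * β

/-- Extended diassociative semigroup axioms. -/
structure IsEDS {Ω : Type*} (S : ETSops Ω) : Prop where
  d1 : ∀ α β γ, S.la (S.la α β) γ = S.la α (S.la β γ)
  d2 : ∀ α β γ, S.la α (S.la β γ) = S.la α (S.ra β γ)
  d3 : ∀ α β γ, S.la (S.ra α β) γ = S.ra α (S.la β γ)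
  d4 : ∀ α β γ, S.ra (S.ra α β) γ = S.ra (S.la α β) γ
  d5 : ∀ α β γ, S.ra (S.la α β) γ = S.ra α (S.ra β γ)
  e1 : ∀ α β γ, S.tr α (S.la β γ) = S.tr α β
  e2 : ∀ α β γ, S.tl (S.ra α β) γ = S.tl β γ
  e3 : ∀ α β γ, S.la (S.tl α β) (S.tl (S.la α β) γ) = S.tl α (S.la β γ)
  e4 : ∀ α β γ, S.tl (S.tl α β) (S.tl (S.la α β) γ) = S.tl β γ
  e5 : ∀ α β γ, S.ra (S.tl α β) (S.tl (S.la α β) γ) = S.tl α (S.ra β γ)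
  e6 : ∀ α β γ, S.tr (S.tl α β) (S.tl (S.la α β) γ) = S.tr β γ
  e7 : ∀ α β γ, S.la (S.tr α (S.ra β γ)) (S.tr β γ) = S.tr (S.la α β) γ
  e8 : ∀ α β γ, S.tl (S.tr α (S.ra β γ)) (S.tr β γ) = S.tl α β
  e9 : ∀ α β γ, S.ra (S.tr α (S.ra β γ)) (S.tr β γ) = S.tr (S.ra α β) γ
  e10 : ∀ α β γ, S.tr (S.tr α (S.ra β γ)) (S.tr β γ) = S.tr α β

/-- Extended triassociative semigroup axioms. -/
structure IsETS {Ω : Type*} (S : ETSops Ω) extends IsEDS S : Prop where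
  t1 : ∀ α β γ, S.st (S.ra α β) γ = S.st β γ
  t2 : ∀ α β γ, S.dot (S.ra α β) γ = S.ra α (S.dot β γ)
  t3 : ∀ α β γ, S.tr α β = S.tr α (S.dot β γ)
  t4 : ∀ α β γ, S.st (S.tl α β) (S.tl (S.la α β) γ) = S.st β γ
  t5 : ∀ α β γ, S.dot (S.tl α β) (S.tl (S.la α β) γ) = S.tl α (S.dot β γ)
  t6 : ∀ α β γ, S.la (S.la α β) γ = S.la α (S.dot β γ)
  t7 : ∀ α β γ, S.st (S.tr α (S.ra β γ)) (S.tr β γ) = S.st α β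
  t8 : ∀ α β γ, S.ra α (S.ra β γ) = S.ra (S.dot α β) γ
  t9 : ∀ α β γ, S.dot (S.tr α (S.ra β γ)) (S.tr β γ) = S.tr (S.dot α β) γ
  t10 : ∀ α β γ, S.st (S.la α β) γ = S.st α (S.ra β γ)
  t11 : ∀ α β γ, S.dot (S.la α β) γ = S.dot α (S.ra β γ)
  t12 : ∀ α β γ, S.tl α β = S.tr β γ
  t13 : ∀ α β γ, S.st α β = S.st α (S.la β γ)
  t14 : ∀ α β γ, S.tl (S.dot α β) γ = S.tl β γ
  t15 : ∀ α β γ, S.la (S.dot α β) γ = S.dot α (S.la β γ)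
  t16 : ∀ α β γ, S.st α β = S.st α (S.dot β γ)
  t17 : ∀ α β γ, S.st (S.dot α β) γ = S.st β γ
  t18 : ∀ α β γ, S.dot (S.dot α β) γ = S.dot α (S.dot β γ)

/-- The seven axioms of an `Ω`-tridendriform algebra
(`p ω a b = a ≺_ω b`, `s ω a b = a ≻_ω b`, `o ω a b = a ∘_ω b`). -/
structure IsOmegaTridend {Ω A : Type*} [AddCommMonoid A] (S : ETSops Ω)
    (p s o : Ω → A → A → A) : Prop where
  ax1 : ∀ α β a b c, p β (p α a b) c =
    p (S.ra α β) a (s (S.tr α β) b c) + p (S.la α β) a (p (S.tl α β) b c)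
      + p (S.dot α β) a (o (S.st α β) b c)
  ax2 : ∀ α β a b c, p β (s α a b) c = s α a (p β b c)
  ax3 : ∀ α β a b c, s α a (s β b c) =
    s (S.ra α β) (s (S.tr α β) a b) c + s (S.la α β) (p (S.tl α β) a b) c
      + s (S.dot α β) (o (S.st α β) a b) c
  ax4 : ∀ α β a b c, o β (s α a b) c = s α a (o β b c)
  ax5 : ∀ α β a b c, o β (p α a b) c = o β a (s α b c)
  ax6 : ∀ α β a b c, p β (o α a b) c = o α a (p β b c)
  ax7 : ∀ α β a b c, o β (o α a b) c = o α a (o β b c)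

/-- The seven axioms of a classical tridendriform algebra
(`p a b = a ≺ b`, `s a b = a ≻ b`, `o a b = a ∘ b`). -/
structure IsTridend {A : Type*} [AddCommMonoid A] (p s o : A → A → A) : Prop where
  ax1 : ∀ a b c, p (p a b) c = p a (s b c) + p a (p b c) + p a (o b c)
  ax2 : ∀ a b c, p (s a b) c = s a (p b c)
  ax3 : ∀ a b c, s a (s b c) = s (s a b) c + s (p a b) c + s (o a b) c
  ax4 : ∀ a b c, o (s a b) c = s a (o b c)
  ax5 : ∀ a b c, o (p a b) c = o a (s b c)
  ax6 : ∀ a b c, p (o a b) c = o a (p b c)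
  ax7 : ∀ a b c, o (o a b) c = o a (o b c)

/-- The product on `kΩ ⊗ A ≅ (Ω →₀ A)` induced by a label product `o`, a
type-transfer product `t`, and a family of bilinear products `m` on `A`. -/
noncomputable def prodF (k : Type*) [CommRing k] {Ω A : Type*} [AddCommGroup A] [Module k A]
    (o t : Ω → Ω → Ω) (m : Ω → A →ₗ[k] A →ₗ[k] A) :
    (Ω →₀ A) → (Ω →₀ A) → (Ω →₀ A) :=
  fun f g => f.sum fun α x => g.sum fun β y => Finsupp.single (o α β) (m (t α β) x y)

section helpers
variable {k : Type*} [CommRing k] {Ω A : Type*} [AddCommGroup A] [Module k A]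
  (o t : Ω → Ω → Ω) (m : Ω → A →ₗ[k] A →ₗ[k] A)

lemma prodF_single (α β : Ω) (x y : A) :
    prodF k o t m (Finsupp.single α x) (Finsupp.single β y)
      = Finsupp.single (o α β) (m (t α β) x y) := by
  unfold prodF
  rw [Finsupp.sum_single_index, Finsupp.sum_single_index] <;> simp

lemma prodF_zero_left (g : Ω →₀ A) : prodF k o t m 0 g = 0 := by
  simp [prodF]

lemma prodF_zero_right (f : Ω →₀ A) : prodF k o t m f 0 = 0 := by
  simp [prodF]

lemma prodF_add_left (f f' g : Ω →₀ A) :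
    prodF k o t m (f + f') g = prodF k o t m f g + prodF k o t m f' g := by
  unfold prodF
  rw [Finsupp.sum_add_index'] <;> simp [Finsupp.sum_add]

lemma prodF_add_right (f g g' : Ω →₀ A) :
    prodF k o t m f (g + g') = prodF k o t m f g + prodF k o t m f g' := by
  unfold prodF
  rw [← Finsupp.sum_add]
  congr 1; ext α x
  rw [Finsupp.sum_add_index'] <;> simp
end helpers

/-- If `Ω` is an ETS and `A` an `Ω`-tridendriform algebra, then `kΩ ⊗ A` with
`(α⊗x) ≺ (β⊗y) = (α←β)⊗(x ≺_{α⊲β} y)`, `(α⊗x) ≻ (β⊗y) = (α→β)⊗(x ≻_{α⊳β} y)`,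
`(α⊗x) ∘ (β⊗y) = (α·β)⊗(x ∘_{α*β} y)` is a classical tridendriform algebra. -/
theorem stmt9 (k : Type*) [CommRing k] {Ω A : Type*} [AddCommGroup A] [Module k A]
    (S : ETSops Ω) (hS : IsETS S) (p s o : Ω → A →ₗ[k] A →ₗ[k] A)
    (hT : IsOmegaTridend S (fun ω a b => p ω a b) (fun ω a b => s ω a b)
      (fun ω a b => o ω a b)) :
    IsTridend (prodF k S.la S.tl p) (prodF k S.ra S.tr s) (prodF k S.dot S.st o) := by
  have t6' : ∀ α β γ, S.la α (S.dot β γ) = S.la α (S.ra β γ) := fun α β γ => by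
    rw [← hS.t6, hS.d1, hS.d2]
  have t8' : ∀ α β γ, S.ra (S.dot α β) γ = S.ra α (S.ra β γ) := fun α β γ =>
    (hS.t8 α β γ).symm
  have t3' : ∀ α β γ, S.tr α (S.dot β γ) = S.tr α β := fun α β γ => (hS.t3 α β γ).symm
  have B1 := hT.ax1; have B2 := hT.ax2; have B3 := hT.ax3; have B4 := hT.ax4
  have B5 := hT.ax5; have B6 := hT.ax6; have B7 := hT.ax7
  constructor <;> intro a b c <;>
  · induction a using Finsupp.induction_linear with
    | zero => simp [prodF_zero_left, prodF_zero_right]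
    | add f g hf hg =>
      simp only [prodF_add_left, prodF_add_right, hf, hg] <;> abel
    | single α x =>
      induction b using Finsupp.induction_linear with
      | zero => simp [prodF_zero_left, prodF_zero_right]
      | add f g hf hg =>
        simp only [prodF_add_left, prodF_add_right, hf, hg] <;> abel
      | single β y =>
        induction c using Finsupp.induction_linear with
        | zero => simp [prodF_zero_left, prodF_zero_right]
        | add f g hf hg =>
          simp only [prodF_add_left, prodF_add_right, hf, hg] <;> abel
        | single γ z =>
          simp only [prodF_single]
          first
            | (rw [B1 (S.tl α β) (S.tl (S.la α β) γ)];
               simp [Finsupp.single_add, hS.e3, hS.e4, hS.e5, hS.e6, hS.t4, hS.t5,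
                 hS.d1, hS.d2, t6'])
            | simp [hS.d3, hS.e1, hS.e2, B2]
            | (rw [B3 (S.tr α (S.ra β γ)) (S.tr β γ)];
               simp [Finsupp.single_add, hS.e7, hS.e8, hS.e9, hS.e10, hS.t7, hS.t9,
                 hS.d4, hS.d5, t8'])
            | simp [hS.t2, hS.t1, t3', B4]
            | (rw [hS.t11, hS.t10, hS.t12 α β γ, B5])
            | simp [hS.t15, hS.t14, ← hS.t13, B6]
            | simp [hS.t18, hS.t17, ← hS.t16, B7]
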